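/- Let X ∈ ℝ^{m×n} have rank s ≤ k, with column space U and row space V. Every matrix of the form Ξ_s + Ξ_{k−s}, where Ξ_s ∈ (U⊗V) ⊕ (U^⊥⊗V) ⊕ (U⊗V^⊥) and Ξ_{k−s} ∈ U^⊥⊗V^⊥ has rank at most k−s, lies in the tangent cone of M_{≤k} = {Y : rank Y ≤ k} at X. -/

import Mathlib

open Matrix
/-- Column space of a matrix. -/
def colSpace {m n : ℕ} (X : Matrix (Fin m) (Fin n) ℝ) : Set (Fin m → ℝ) :=
  {y | ∃ v, X.mulVec v = y}

/-- Row space of a matrix. -/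
def rowSpace {m n : ℕ} (X : Matrix (Fin m) (Fin n) ℝ) : Set (Fin n → ℝ) :=
  colSpace Xᵀ

/-- Orthogonal complement (w.r.t. the Euclidean dot product) of a set of vectors. -/
def perp {p : ℕ} (S : Set (Fin p → ℝ)) : Set (Fin p → ℝ) :=
  {x | ∀ u ∈ S, ∑ i, x i * u i = 0}

/-- `A ⊗ B`: matrices whose column space lies in `A` and row space lies in `B`. -/
def tensorSp {m n : ℕ} (A : Set (Fin m → ℝ)) (B : Set (Fin n → ℝ)) :
    Set (Matrix (Fin m) (Fin n) ℝ) :=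
  {Z | (∀ v, Z.mulVec v ∈ A) ∧ (∀ u, Zᵀ.mulVec u ∈ B)}

/-- Frobenius inner product. -/
noncomputable def frobInner {m n : ℕ} (A B : Matrix (Fin m) (Fin n) ℝ) : ℝ :=
  ∑ i, ∑ j, A i j * B i j

/-- Frobenius norm. -/
noncomputable def frobNorm {m n : ℕ} (A : Matrix (Fin m) (Fin n) ℝ) : ℝ :=
  Real.sqrt (frobInner A A)

/-- The tangent space `T_X M_s = (U⊗V) ⊕ (U^⊥⊗V) ⊕ (U⊗V^⊥)`, `U, V` column/row space of `X`. -/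
def tangentMs {m n : ℕ} (X : Matrix (Fin m) (Fin n) ℝ) : Set (Matrix (Fin m) (Fin n) ℝ) :=
  {Ξ | ∃ Z₁ ∈ tensorSp (colSpace X) (rowSpace X),
       ∃ Z₂ ∈ tensorSp (perp (colSpace X)) (rowSpace X),
       ∃ Z₃ ∈ tensorSp (colSpace X) (perp (rowSpace X)), Ξ = Z₁ + Z₂ + Z₃}

/-- Sequential tangent cone of a set of matrices, w.r.t. Frobenius distance. -/
def matTangentCone {m n : ℕ} (M : Set (Matrix (Fin m) (Fin n) ℝ))
    (X : Matrix (Fin m) (Fin n) ℝ) : Set (Matrix (Fin m) (Fin n) ℝ) :=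
  {Ξ | ∃ (Y : ℕ → Matrix (Fin m) (Fin n) ℝ) (a : ℕ → ℝ),
      (∀ i, Y i ∈ M) ∧ (∀ i, 0 < a i) ∧
      Filter.Tendsto (fun i => frobNorm (Y i - X)) Filter.atTop (nhds 0) ∧
      Filter.Tendsto (fun i => frobNorm (a i • (Y i - X) - Ξ)) Filter.atTop (nhds 0)}

/-- `P` is the orthogonal projector (symmetric idempotent matrix) onto `U`. -/
def IsOrthProjOnto {p : ℕ} (P : Matrix (Fin p) (Fin p) ℝ) (U : Set (Fin p → ℝ)) : Prop :=
  Pᵀ = P ∧ P * P = P ∧ colSpace P = U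


section Aux

lemma factor_col {m n p : ℕ} (X : Matrix (Fin m) (Fin n) ℝ) (Z : Matrix (Fin m) (Fin p) ℝ)
    (h : ∀ v, Z.mulVec v ∈ colSpace X) :
    ∃ E : Matrix (Fin n) (Fin p) ℝ, Z = X * E := by
  choose w hw using fun j => h (Pi.single j 1)
  refine ⟨Matrix.of fun l j => w j l, ?_⟩
  ext i j
  have := congrFun (hw j) i
  simp only [Matrix.mulVec, dotProduct, Pi.single_apply, mul_ite, mul_one, mul_zero,
    Finset.sum_ite_eq', Finset.mem_univ, if_true] at this
  simp [Matrix.mul_apply, Matrix.mulVec, dotProduct] at this ⊢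
  rw [← this]

lemma rank_add_le' {m n : ℕ} (A B : Matrix (Fin m) (Fin n) ℝ) :
    (A + B).rank ≤ A.rank + B.rank := by
  rw [Matrix.rank, Matrix.rank, Matrix.rank, Matrix.mulVecLin_add]
  have h : LinearMap.range (A.mulVecLin + B.mulVecLin) ≤
      LinearMap.range A.mulVecLin ⊔ LinearMap.range B.mulVecLin := by
    rintro x ⟨v, rfl⟩
    exact Submodule.mem_sup.2 ⟨A.mulVecLin v, ⟨v, rfl⟩, B.mulVecLin v, ⟨v, rfl⟩, rfl⟩
  exact (Submodule.finrank_mono h).trans (Submodule.finrank_add_le_finrank_add_finrank _ _)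

lemma expand_key {m n : ℕ} (X : Matrix (Fin m) (Fin n) ℝ)
    (F : Matrix (Fin m) (Fin m) ℝ) (E D : Matrix (Fin n) (Fin n) ℝ)
    (Ξk : Matrix (Fin m) (Fin n) ℝ) (c : ℝ) :
    (1 + c • F) * (X * (1 + c • E)) * (1 + c • D) + c • Ξk - X
      = c • (X * E + F * X + X * D + Ξk)
        + c ^ 2 • (F * (X * E) + F * (X * D) + (X * E) * D)
        + c ^ 3 • (F * (X * E) * D) := by
  simp only [Matrix.mul_add, Matrix.add_mul, Matrix.mul_smul, Matrix.smul_mul,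
    Matrix.mul_one, Matrix.one_mul, smul_add, smul_smul, Matrix.mul_assoc]
  module

lemma frob_cont {m n : ℕ} : Continuous (fun A : Matrix (Fin m) (Fin n) ℝ => frobNorm A) := by
  unfold frobNorm frobInner
  apply Real.continuous_sqrt.comp
  apply continuous_finset_sum _ fun i _ => ?_
  apply continuous_finset_sum _ fun j _ => ?_
  exact (continuous_id.matrix_elem i j).mul
    (continuous_id.matrix_elem i j)

lemma frob_tendsto {m n : ℕ} {f : ℕ → Matrix (Fin m) (Fin n) ℝ}
    (h : Filter.Tendsto f Filter.atTop (nhds 0)) :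
    Filter.Tendsto (fun i => frobNorm (f i)) Filter.atTop (nhds 0) := by
  have h0 : frobNorm (0 : Matrix (Fin m) (Fin n) ℝ) = 0 := by
    simp [frobNorm, frobInner]
  have := (frob_cont.tendsto 0).comp h
  rw [h0] at this
  exact this

lemma cseq : Filter.Tendsto (fun i : ℕ => ((i : ℝ) + 1)⁻¹) Filter.atTop (nhds 0) := by
  simpa using tendsto_one_div_add_atTop_nhds_zero_nat (𝕜 := ℝ)

end Aux

/-- For `X` of rank `s ≤ k`, every matrix `Ξ_s + Ξ_{k−s}` with
`Ξ_s ∈ T_X M_s = (U⊗V) ⊕ (U^⊥⊗V) ⊕ (U⊗V^⊥)` and `Ξ_{k−s} ∈ U^⊥⊗V^⊥` of rank at most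
`k−s` lies in the tangent cone of `M_{≤k}` at `X`. -/
theorem stmt_4 {m n s k : ℕ} (X : Matrix (Fin m) (Fin n) ℝ)
    (hrank : X.rank = s) (hsk : s ≤ k)
    (Ξs : Matrix (Fin m) (Fin n) ℝ) (hΞs : Ξs ∈ tangentMs X)
    (Ξk : Matrix (Fin m) (Fin n) ℝ)
    (hΞk : Ξk ∈ tensorSp (perp (colSpace X)) (perp (rowSpace X)))
    (hΞkrk : Ξk.rank ≤ k - s) :
    Ξs + Ξk ∈ matTangentCone {Y : Matrix (Fin m) (Fin n) ℝ | Y.rank ≤ k} X := by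
  obtain ⟨Z₁, hZ₁, Z₂, hZ₂, Z₃, hZ₃, rfl⟩ := hΞs
  obtain ⟨E, hE⟩ := factor_col X Z₁ hZ₁.1
  obtain ⟨D, hD⟩ := factor_col X Z₃ hZ₃.1
  obtain ⟨G, hG⟩ := factor_col Xᵀ Z₂ᵀ hZ₂.2
  have hF : Z₂ = Gᵀ * X := by
    rw [← transpose_transpose Z₂, hG, transpose_mul, transpose_transpose]
  set c : ℕ → ℝ := fun i => ((i : ℝ) + 1)⁻¹ with hc
  obtain ⟨W, hW⟩ : ∃ W, W = X * E + Gᵀ * X + X * D + Ξk := ⟨_, rfl⟩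
  obtain ⟨R₁, hR₁⟩ : ∃ R₁, R₁ = Gᵀ * (X * E) + Gᵀ * (X * D) + (X * E) * D := ⟨_, rfl⟩
  obtain ⟨R₂, hR₂⟩ : ∃ R₂, R₂ = Gᵀ * (X * E) * D := ⟨_, rfl⟩
  have hWeq : Z₁ + Z₂ + Z₃ + Ξk = W := by rw [hW, hE, hF, hD]
  set Y : ℕ → Matrix (Fin m) (Fin n) ℝ :=
    fun i => (1 + c i • Gᵀ) * (X * (1 + c i • E)) * (1 + c i • D) + c i • Ξk with hYdef
  have hcpos : ∀ i : ℕ, (0 : ℝ) < (i : ℝ) + 1 := fun i => by positivity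
  have hac : ∀ i : ℕ, ((i : ℝ) + 1) * c i = 1 := fun i =>
    mul_inv_cancel₀ (hcpos i).ne'
  have hYX : ∀ i : ℕ, Y i - X = c i • W + (c i) ^ 2 • R₁ + (c i) ^ 3 • R₂ := by
    intro i
    rw [hW, hR₁, hR₂]
    exact expand_key X Gᵀ E D Ξk (c i)
  refine ⟨Y, fun i => (i : ℝ) + 1, fun i => ?_, fun i => hcpos i, ?_, ?_⟩
  · -- rank bound
    have h1 : ((1 + c i • Gᵀ) * (X * (1 + c i • E)) * (1 + c i • D)).rank ≤ s := by
      refine le_trans (rank_mul_le_left _ _) ?_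
      refine le_trans (rank_mul_le_right _ _) ?_
      refine le_trans (rank_mul_le_left _ _) ?_
      exact hrank.le
    have h2 : (c i • Ξk).rank ≤ k - s := by
      have h : c i • Ξk = (c i • (1 : Matrix (Fin m) (Fin m) ℝ)) * Ξk := by
        rw [Matrix.smul_mul, Matrix.one_mul]
      rw [h]
      exact (rank_mul_le_right _ _).trans hΞkrk
    have h3 := (rank_add_le' _ _).trans (add_le_add h1 h2)
    simp only [Set.mem_setOf_eq]
    show ((1 + c i • Gᵀ) * (X * (1 + c i • E)) * (1 + c i • D) + c i • Ξk).rank ≤ k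
    omega
  · -- Y i → X
    have hg : Continuous (fun t : ℝ => t • W + t ^ 2 • R₁ + t ^ 3 • R₂) :=
      ((continuous_id.smul continuous_const).add
        ((continuous_pow 2).smul continuous_const)).add
        ((continuous_pow 3).smul continuous_const)
    have hlim : Filter.Tendsto (fun i => Y i - X) Filter.atTop (nhds 0) := by
      have h := (hg.tendsto 0).comp cseq
      have h0 : (0 : ℝ) • W + (0 : ℝ) ^ 2 • R₁ + (0 : ℝ) ^ 3 • R₂ = 0 := by simp
      rw [Function.comp_def, h0] at h
      exact h.congr fun i => (hYX i).symm
    exact frob_tendsto hlim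
  · -- a i • (Y i - X) → Ξ
    have key : ∀ i : ℕ, ((i : ℝ) + 1) • (Y i - X) - (Z₁ + Z₂ + Z₃ + Ξk)
        = c i • R₁ + (c i) ^ 2 • R₂ := by
      intro i
      have e2 : ((i : ℝ) + 1) * (c i) ^ 2 = c i := by
        rw [pow_two, ← mul_assoc, hac i, one_mul]
      have e3 : ((i : ℝ) + 1) * (c i) ^ 3 = (c i) ^ 2 := by
        rw [pow_succ, ← mul_assoc, e2, ← pow_two]
      rw [hYX i, hWeq, smul_add, smul_add, smul_smul, smul_smul, smul_smul,
        hac i, e2, e3, one_smul]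
      abel
    have hg : Continuous (fun t : ℝ => t • R₁ + t ^ 2 • R₂) :=
      (continuous_id.smul continuous_const).add
        ((continuous_pow 2).smul continuous_const)
    have hlim : Filter.Tendsto
        (fun i : ℕ => ((i : ℝ) + 1) • (Y i - X) - (Z₁ + Z₂ + Z₃ + Ξk))
        Filter.atTop (nhds 0) := by
      have h := (hg.tendsto 0).comp cseq
      have h0 : (0 : ℝ) • R₁ + (0 : ℝ) ^ 2 • R₂ = 0 := by simp
      rw [Function.comp_def, h0] at h
      exact h.congr fun i => (key i).symm
    exact frob_tendsto hlim
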